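/- Every limit of tree convex sets (in the Cantor topology on subsets of a free group) is a limit tree convex set, and conversely every limit tree convex set is a limit of finite tree convex sets; i.e., a subset C of a free group is limit tree convex if and only if it is a limit in Cantor space of tree convex sets. -/

import Mathlib

/-- Word-metric distance on the free group (w.r.t. the free generating set):
the length of the reduced word of `u⁻¹ * v`. -/
def fgDist {α : Type*} [DecidableEq α] (u v : FreeGroup α) : ℕ :=
  FreeGroup.norm (u⁻¹ * v)

/-- The tree convexity condition: whenever `u, w ∈ C` and `v` lies on the geodesic
between `u` and `w`, the ball of radius `min(d(v,u), d(v,w)) - 1` around `v` is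
contained in `C`. A finite set satisfying this is tree convex; an arbitrary set
satisfying this is a limit tree convex set. -/
def TreeConvexCond {α : Type*} [DecidableEq α] (C : Set (FreeGroup α)) : Prop :=
  ∀ u ∈ C, ∀ w ∈ C, ∀ v : FreeGroup α,
    fgDist u v + fgDist v w = fgDist u w →
    ∀ g : FreeGroup α, fgDist v g + 1 ≤ min (fgDist v u) (fgDist v w) → g ∈ C


namespace FGAux

open FreeGroup List

variable {α : Type*} [DecidableEq α]

abbrev NR (p q : α × Bool) : Prop := q ≠ (p.1, !p.2)

lemma reduced_reduce (L : List (α × Bool)) :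
    List.Chain' NR (FreeGroup.reduce L) := by
  induction L with
  | nil => exact List.isChain_nil
  | cons x L ih =>
    rw [FreeGroup.reduce.cons]
    cases h : FreeGroup.reduce L with
    | nil => exact List.isChain_singleton _
    | cons hd tl =>
      rw [h] at ih
      by_cases hc : x.1 = hd.1 ∧ x.2 = !hd.2
      · simp only [if_pos hc]
        exact ih.tail
      · simp only [if_neg hc]
        refine List.isChain_cons_cons.mpr ⟨?_, ih⟩
        intro he
        exact hc ⟨by rw [he], by rw [he]; simp⟩

lemma reduce_eq_self {L : List (α × Bool)} (h : List.Chain' NR L) :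
    FreeGroup.reduce L = L := by
  rcases (FreeGroup.reduce.red (L := L)).cases_head with h1 | ⟨c, hstep, _⟩
  · exact h1.symm
  · exfalso
    cases hstep with
    | @not L₁ L₂ x b =>
      have := (List.isChain_append_cons_cons.mp h).2.1
      exact this rfl

lemma chain'_toWord (x : FreeGroup α) : List.Chain' NR x.toWord := by
  rw [← FreeGroup.reduce_toWord]
  exact reduced_reduce _

lemma norm_mul_eq {x y : FreeGroup α}
    (h : ∀ p ∈ x.toWord.getLast?, ∀ q ∈ y.toWord.head?, NR p q) :
    FreeGroup.norm (x * y) = FreeGroup.norm x + FreeGroup.norm y := by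
  have hxy : x * y = FreeGroup.mk (x.toWord ++ y.toWord) := by
    rw [← FreeGroup.mul_mk, FreeGroup.mk_toWord, FreeGroup.mk_toWord]
  have hred : FreeGroup.reduce (x.toWord ++ y.toWord) = x.toWord ++ y.toWord :=
    reduce_eq_self (List.isChain_append.mpr ⟨chain'_toWord x, chain'_toWord y, h⟩)
  rw [FreeGroup.norm, hxy, FreeGroup.toWord_mk, hred, List.length_append]
  rfl

lemma cancel_of_norm_ne {x y : FreeGroup α}
    (h : FreeGroup.norm (x * y) ≠ FreeGroup.norm x + FreeGroup.norm y) :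
    ∃ p, x.toWord.getLast? = some p ∧ y.toWord.head? = some (p.1, !p.2) := by
  by_contra hc
  push_neg at hc
  apply h
  apply norm_mul_eq
  intro p hp q hq he
  exact hc p hp (he ▸ hq)

lemma heads_ne {a b : FreeGroup α} (ha : a ≠ 1) (hb : b ≠ 1)
    (hab : FreeGroup.norm (a⁻¹ * b) = FreeGroup.norm a + FreeGroup.norm b) :
    a.toWord.head? ≠ b.toWord.head? := by
  intro he
  obtain ⟨p, ta, hpa⟩ := List.exists_cons_of_ne_nil (mt FreeGroup.toWord_eq_nil_iff.mp ha)
  obtain ⟨q, tb, hqb⟩ := List.exists_cons_of_ne_nil (mt FreeGroup.toWord_eq_nil_iff.mp hb)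
  rw [hpa, hqb] at he
  simp only [List.head?_cons, Option.some.injEq] at he
  subst he
  set f : α × Bool → α × Bool := fun g => (g.1, !g.2) with hf
  have key : a⁻¹ * b = FreeGroup.mk ((ta.map f).reverse ++ ((p.1, !p.2) :: (p.1, !(!p.2)) :: tb)) := by
    conv_lhs => rw [← FreeGroup.mk_toWord (x := a), ← FreeGroup.mk_toWord (x := b)]
    rw [FreeGroup.inv_mk, FreeGroup.mul_mk, hpa, hqb]
    congr 1
    rw [FreeGroup.invRev]
    simp only [List.map_cons, List.reverse_cons, hf]
    rw [List.append_assoc]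
    congr 2
    simp [Bool.not_not]
  have hstep : FreeGroup.mk ((ta.map f).reverse ++ ((p.1, !p.2) :: (p.1, !(!p.2)) :: tb))
      = FreeGroup.mk ((ta.map f).reverse ++ tb) :=
    Quot.sound (FreeGroup.Red.Step.not)
  have hle : FreeGroup.norm (a⁻¹ * b) ≤ ta.length + tb.length := by
    rw [key, hstep]
    calc FreeGroup.norm (FreeGroup.mk ((ta.map f).reverse ++ tb))
        ≤ ((ta.map f).reverse ++ tb).length := FreeGroup.norm_mk_le
      _ = ta.length + tb.length := by simp
  have hna : FreeGroup.norm a = ta.length + 1 := by rw [FreeGroup.norm, hpa]; simp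
  have hnb : FreeGroup.norm b = tb.length + 1 := by rw [FreeGroup.norm, hqb]; simp
  omega

lemma key_dichotomy {a b : FreeGroup α} (v : FreeGroup α) (ha : a ≠ 1) (hb : b ≠ 1)
    (hab : FreeGroup.norm (a⁻¹ * b) = FreeGroup.norm a + FreeGroup.norm b) :
    FreeGroup.norm (v * a) = FreeGroup.norm v + FreeGroup.norm a ∨
      FreeGroup.norm (v * b) = FreeGroup.norm v + FreeGroup.norm b := by
  by_contra h
  push_neg at h
  obtain ⟨p, hp, hpa⟩ := cancel_of_norm_ne h.1
  obtain ⟨q, hq, hqb⟩ := cancel_of_norm_ne h.2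
  rw [hp, Option.some.injEq] at hq
  subst hq
  exact heads_ne ha hb hab (by rw [hpa, hqb])

end FGAux

/-- A subset `C` of a finitely generated free group is a limit tree convex set if and
only if it is a limit in Cantor space (pointwise convergence of indicator functions) of
(finite) tree convex sets. -/
theorem limitTreeConvex_iff_limit_of_treeConvex {α : Type*} [DecidableEq α] [Finite α]
    (C : Set (FreeGroup α)) :
    TreeConvexCond C ↔
      ∃ Cs : ℕ → Set (FreeGroup α),
        (∀ n, (Cs n).Finite ∧ TreeConvexCond (Cs n)) ∧
        ∀ g : FreeGroup α, ∃ N : ℕ, ∀ n ≥ N, (g ∈ Cs n ↔ g ∈ C) := by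
  constructor
  · intro hC
    refine ⟨fun n => {g | g ∈ C ∧ FreeGroup.norm g ≤ n}, fun n => ⟨?_, ?_⟩, ?_⟩
    · -- finiteness
      have hfin : {L : List (α × Bool) | L.length ≤ n}.Finite := List.finite_length_le _ n
      have hsub : {g : FreeGroup α | g ∈ C ∧ FreeGroup.norm g ≤ n} ⊆
          FreeGroup.toWord ⁻¹' {L | L.length ≤ n} := fun g hg => hg.2
      exact (hfin.preimage (Set.injOn_of_injective FreeGroup.toWord_injective)).subset hsub
    · -- tree convexity of the truncation
      intro u hu w hw v hgeo g hg
      refine ⟨hC u hu.1 w hw.1 v hgeo g hg, ?_⟩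
      simp only [fgDist] at hgeo hg
      have hm1 : FreeGroup.norm (v⁻¹ * g) + 1 ≤ FreeGroup.norm (v⁻¹ * u) :=
        hg.trans (min_le_left _ _)
      have hm2 : FreeGroup.norm (v⁻¹ * g) + 1 ≤ FreeGroup.norm (v⁻¹ * w) :=
        hg.trans (min_le_right _ _)
      have ha : v⁻¹ * u ≠ 1 := by
        intro h; rw [h] at hm1; simp at hm1
      have hb : v⁻¹ * w ≠ 1 := by
        intro h; rw [h] at hm2; simp at hm2
      have hab : FreeGroup.norm ((v⁻¹ * u)⁻¹ * (v⁻¹ * w)) =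
          FreeGroup.norm (v⁻¹ * u) + FreeGroup.norm (v⁻¹ * w) := by
        have e : (v⁻¹ * u)⁻¹ * (v⁻¹ * w) = u⁻¹ * w := by group
        have e2 : u⁻¹ * v = (v⁻¹ * u)⁻¹ := by group
        rw [e]
        rw [e2, FreeGroup.norm_inv_eq] at hgeo
        exact hgeo.symm
      have hgle : FreeGroup.norm g ≤ FreeGroup.norm v + FreeGroup.norm (v⁻¹ * g) := by
        calc FreeGroup.norm g = FreeGroup.norm (v * (v⁻¹ * g)) := by
              rw [mul_inv_cancel_left]
          _ ≤ _ := FreeGroup.norm_mul_le _ _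
      rcases FGAux.key_dichotomy v ha hb hab with h | h
      · rw [mul_inv_cancel_left] at h
        have hun := hu.2
        omega
      · rw [mul_inv_cancel_left] at h
        have hwn := hw.2
        omega
    · -- pointwise convergence
      intro g
      exact ⟨FreeGroup.norm g, fun n hn => ⟨fun h => h.1, fun h => ⟨h, hn⟩⟩⟩
  · rintro ⟨Cs, h1, h2⟩ u hu w hw v hgeo g hg
    obtain ⟨Nu, hNu⟩ := h2 u
    obtain ⟨Nw, hNw⟩ := h2 w
    obtain ⟨Ng, hNg⟩ := h2 g
    set n := max Nu (max Nw Ng) with hn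
    have hgn : g ∈ Cs n :=
      (h1 n).2 u ((hNu n (by omega)).mpr hu) w ((hNw n (by omega)).mpr hw) v hgeo g hg
    exact (hNg n (by omega)).mp hgn
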